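/- The pair (x*, λ*) is a generalized user equilibrium of the coupled system — meaning that (i) x* is an admissible travel pattern which is a user equilibrium given λ*, and (ii) there exist g*, p* ∈ ℝ^{n_P}, γ ∈ ℝ and η ∈ ℝ^{m_P} with η ≥ 0 satisfying the economic-dispatch KKT system p* = g* − d(x*), 1ᵀp* = 0, H·p* ≤ f̄, ηᵀ(f̄ − H·p*) = 0, λ* = Q·g* + μ, and λ* = γ·1 − Hᵀη — if and only if there exist g*, p* ∈ ℝ^{n_P} such that λ* = Q·g* + μ and (x*, g*, p*) is a global minimizer of the joint program: minimize J(x,g,p) := (1/2)gᵀQg + μᵀg + (1/2)xᵀ(A^LR)ᵀdiag(α)(A^LR)x + βᵀ(A^LR)x over the feasible set F(f̄) := {(x,g,p) : p = g − d(x), 1ᵀp = 0, H·p ≤ f̄, 1ᵀx = 1, x ≥ 0}. -/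

import Mathlib

open Matrix

/-- Per-route traveler cost in the coupled power–transportation model. -/
noncomputable def routeCost {mT nR nC nP : ℕ}
    (ALR : Matrix (Fin mT) (Fin nR) ℝ) (ACR : Matrix (Fin nC) (Fin nR) ℝ)
    (ACB : Matrix (Fin nC) (Fin nP) ℝ) (α β : Fin mT → ℝ) (ρ : ℝ)
    (x : Fin nR → ℝ) (lam : Fin nP → ℝ) : Fin nR → ℝ :=
  ALRᵀ.mulVec ((Matrix.diagonal α).mulVec (ALR.mulVec x) + β) +
    ρ • (ACRᵀ.mulVec (ACB.mulVec lam))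

/-- Charging load induced by the travel pattern `x`: `d(x) = ρ (A^CB)ᵀ A^CR x`. -/
noncomputable def chargingLoad {nR nC nP : ℕ}
    (ACR : Matrix (Fin nC) (Fin nR) ℝ) (ACB : Matrix (Fin nC) (Fin nP) ℝ)
    (ρ : ℝ) (x : Fin nR → ℝ) : Fin nP → ℝ :=
  ρ • (ACBᵀ.mulVec (ACR.mulVec x))

/-- Objective of the joint program:
`J(x,g,p) = ½ gᵀQg + μᵀg + ½ xᵀ(A^LR)ᵀ diag(α) A^LR x + βᵀ A^LR x`. -/
noncomputable def jointObj {mT nR nP : ℕ}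
    (ALR : Matrix (Fin mT) (Fin nR) ℝ) (α β : Fin mT → ℝ)
    (Q μ : Fin nP → ℝ) (x : Fin nR → ℝ) (g : Fin nP → ℝ) : ℝ :=
  (1 / 2) * (g ⬝ᵥ (Matrix.diagonal Q).mulVec g) + μ ⬝ᵥ g +
    (1 / 2) * (ALR.mulVec x ⬝ᵥ (Matrix.diagonal α).mulVec (ALR.mulVec x)) +
    β ⬝ᵥ ALR.mulVec x

/-- Feasible set `F(f̄)` of the joint program. -/
def jointFeasible {nR nC nP mP : ℕ}
    (ACR : Matrix (Fin nC) (Fin nR) ℝ) (ACB : Matrix (Fin nC) (Fin nP) ℝ)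
    (H : Matrix (Fin mP) (Fin nP) ℝ) (ρ : ℝ) (fbar : Fin mP → ℝ)
    (x : Fin nR → ℝ) (g p : Fin nP → ℝ) : Prop :=
  p = g - chargingLoad ACR ACB ρ x ∧ (∑ i, p i) = 0 ∧
    (∀ ℓ, H.mulVec p ℓ ≤ fbar ℓ) ∧ (∑ r, x r) = 1 ∧ ∀ r, 0 ≤ x r

open Finset
open scoped InnerProductSpace

namespace GUEAux

noncomputable def combo {κ : Type*} [Fintype κ] {E : Type*} [NormedAddCommGroup E]
    [NormedSpace ℝ E] (w : κ → E) : (κ → ℝ) →ₗ[ℝ] E where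
  toFun z := ∑ i, z i • w i
  map_add' x y := by simp [add_smul, Finset.sum_add_distrib]
  map_smul' c x := by simp [Finset.smul_sum, smul_smul]

/-- Carathéodory for finitely generated cones. -/
lemma cone_caratheodory {ι : Type*} [Fintype ι] [DecidableEq ι]
    {E : Type*} [NormedAddCommGroup E] [NormedSpace ℝ E] (a : ι → E) (s : Finset ι)
    (y : ι → ℝ) (hy : ∀ i, 0 ≤ y i) :
    ∃ (t : Finset ι) (z : ι → ℝ), (∀ i, 0 ≤ z i) ∧
      LinearIndependent ℝ (fun i : t => a i) ∧
      ∑ i ∈ s, y i • a i = ∑ i ∈ t, z i • a i := by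
  classical
  induction s using Finset.strongInduction generalizing y with
  | _ s ih =>
    by_cases hs : LinearIndependent ℝ (fun i : s => a i)
    · exact ⟨s, y, hy, hs, rfl⟩
    · -- get a nontrivial relation with a positive coefficient
      obtain ⟨g, hg0, j0, hj0⟩ := Fintype.not_linearIndependent_iff.mp hs
      -- extend g to ι
      set c : ι → ℝ := fun i => if h : i ∈ s then g ⟨i, h⟩ else 0 with hc
      have hcs : ∑ i ∈ s, c i • a i = 0 := by
        rw [← hg0, ← Finset.sum_attach s (fun i => c i • a i)]
        exact Finset.sum_congr rfl fun i _ => by simp [hc, i.2]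
      have hcne : ∃ i ∈ s, c i ≠ 0 := ⟨j0, j0.2, by simpa [hc, j0.2] using hj0⟩
      -- WLOG some positive coefficient: pick the sign
      obtain ⟨c, hcs, hcpos⟩ : ∃ c' : ι → ℝ, (∑ i ∈ s, c' i • a i = 0) ∧ ∃ i ∈ s, 0 < c' i := by
        obtain ⟨i0, hi0s, hi0⟩ := hcne
        rcases lt_or_gt_of_ne hi0 with h | h
        · exact ⟨-c, by simpa using hcs, i0, hi0s, by simpa using h⟩
        · exact ⟨c, hcs, i0, hi0s, h⟩
      -- minimize y i / c i over positive coefficients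
      set T : Finset ι := s.filter (fun i => 0 < c i) with hT
      have hTne : T.Nonempty := by
        obtain ⟨i, his, hi⟩ := hcpos
        exact ⟨i, Finset.mem_filter.mpr ⟨his, hi⟩⟩
      obtain ⟨i0, hi0T, hi0min⟩ := Finset.exists_min_image T (fun i => y i / c i) hTne
      have hi0s : i0 ∈ s := (Finset.mem_filter.mp hi0T).1
      have hci0 : 0 < c i0 := (Finset.mem_filter.mp hi0T).2
      set τ : ℝ := y i0 / c i0 with hτ
      have hτ0 : 0 ≤ τ := div_nonneg (hy i0) hci0.le
      set y' : ι → ℝ := fun i => if i ∈ s.erase i0 then y i - τ * c i else 0 with hy'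
      have hy'nn : ∀ i, 0 ≤ y' i := by
        intro i
        rw [hy']
        dsimp only
        split_ifs with h
        · have his : i ∈ s := Finset.mem_of_mem_erase h
          rcases le_or_gt (c i) 0 with hc0 | hc0
          · nlinarith [hy i]
          · have h2 := hi0min i (Finset.mem_filter.mpr ⟨his, hc0⟩)
            have h3 : y i0 / c i0 * c i ≤ y i := by
              rw [div_mul_eq_mul_div, div_le_iff₀ hci0]
              rw [div_le_div_iff₀ hci0 hc0] at h2
              · nlinarith [h2]
            simpa [hτ] using h3
        · exact le_refl 0
      have hsum : ∑ i ∈ s.erase i0, y' i • a i = ∑ i ∈ s, y i • a i := by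
        have h1 : ∑ i ∈ s.erase i0, y' i • a i = ∑ i ∈ s.erase i0, (y i - τ * c i) • a i :=
          Finset.sum_congr rfl fun i hi => by rw [hy']; simp [hi]
        have h2 : ∑ i ∈ s, (y i - τ * c i) • a i = ∑ i ∈ s.erase i0, (y i - τ * c i) • a i := by
          rw [← Finset.sum_erase_add s _ hi0s]
          have : y i0 - τ * c i0 = 0 := by
            rw [hτ]; field_simp; ring
          simp [this]
        rw [h1, ← h2]
        have : ∑ i ∈ s, (y i - τ * c i) • a i
            = ∑ i ∈ s, y i • a i - τ • ∑ i ∈ s, c i • a i := by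
          rw [Finset.smul_sum, ← Finset.sum_sub_distrib]
          exact Finset.sum_congr rfl fun i _ => by
            rw [sub_smul, smul_smul]
        rw [this, hcs, smul_zero, sub_zero]
      obtain ⟨t, z, hznn, hind, heq⟩ := ih (s.erase i0) (Finset.erase_ssubset hi0s) y' hy'nn
      exact ⟨t, z, hznn, hind, by rw [← hsum, heq]⟩

lemma combo_apply {κ : Type*} [Fintype κ] {E : Type*} [NormedAddCommGroup E]
    [NormedSpace ℝ E] (w : κ → E) (z : κ → ℝ) : combo w z = ∑ i, z i • w i := rfl

lemma coneSet_eq {ι : Type*} [Fintype ι] [DecidableEq ι] {n : ℕ}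
    (a : ι → EuclideanSpace ℝ (Fin n)) :
    {x : EuclideanSpace ℝ (Fin n) | ∃ y : ι → ℝ, (∀ i, 0 ≤ y i) ∧ x = ∑ i, y i • a i}
      = ⋃ t ∈ {t : Finset ι | LinearIndependent ℝ (fun i : t => a i)},
        (combo (fun i : t => a i)) '' {z | ∀ i, 0 ≤ z i} := by
  ext x
  simp only [Set.mem_setOf_eq, Set.mem_iUnion, Set.mem_image]
  constructor
  · rintro ⟨y, hy, rfl⟩
    obtain ⟨t, z, hz, hind, heq⟩ := cone_caratheodory a Finset.univ y hy
    refine ⟨t, hind, fun i => z i, fun i => hz i, ?_⟩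
    rw [combo_apply, Finset.sum_coe_sort t (fun i => z i • a i), ← heq]
  · rintro ⟨t, hind, z, hz, rfl⟩
    classical
    refine ⟨fun i => if h : i ∈ t then z ⟨i, h⟩ else 0, fun i => ?_, ?_⟩
    · dsimp only; split_ifs with h
      · exact hz ⟨i, h⟩
      · exact le_rfl
    rw [combo_apply]
    rw [← Finset.sum_subset (Finset.subset_univ t)
      (fun i _ hit => by simp [dif_neg hit])]
    rw [← Finset.sum_attach t
      (fun i => (if h : i ∈ t then z ⟨i, h⟩ else 0 : ℝ) • a i)]
    exact Finset.sum_congr rfl fun i _ => by simp [dif_pos i.2]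

lemma isClosed_coneSet {ι : Type*} [Fintype ι] [DecidableEq ι] {n : ℕ}
    (a : ι → EuclideanSpace ℝ (Fin n)) :
    IsClosed {x : EuclideanSpace ℝ (Fin n) | ∃ y : ι → ℝ, (∀ i, 0 ≤ y i) ∧ x = ∑ i, y i • a i} := by
  rw [coneSet_eq a]
  refine Set.Finite.isClosed_biUnion (Set.toFinite _) (fun t ht => ?_)
  have hinj : Function.Injective (combo (fun i : t => a i)) := by
    rw [← LinearMap.ker_eq_bot]
    rw [LinearMap.ker_eq_bot']
    intro z hz
    rw [combo_apply] at hz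
    exact funext (Fintype.linearIndependent_iff.mp ht z hz)
  have hker : LinearMap.ker (combo (fun i : t => a i)) = ⊥ := LinearMap.ker_eq_bot.mpr hinj
  have hce := LinearMap.isClosedEmbedding_of_injective hker
  refine hce.isClosedMap _ ?_
  have : {z : t → ℝ | ∀ i, 0 ≤ z i} = ⋂ i, {z : t → ℝ | 0 ≤ z i} := by
    ext z; simp
  rw [this]
  exact isClosed_iInter fun i => isClosed_le continuous_const (continuous_apply i)

/-- Farkas' lemma / polar cone characterization, Euclidean version. -/
lemma farkas_euclid {ι : Type*} [Fintype ι] [DecidableEq ι] {n : ℕ}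
    (a : ι → EuclideanSpace ℝ (Fin n)) (b : EuclideanSpace ℝ (Fin n))
    (h : ∀ v : EuclideanSpace ℝ (Fin n), (∀ i, ⟪a i, v⟫_ℝ ≤ 0) → ⟪b, v⟫_ℝ ≤ 0) :
    ∃ y : ι → ℝ, (∀ i, 0 ≤ y i) ∧ b = ∑ i, y i • a i := by
  by_contra hb
  set S : Set (EuclideanSpace ℝ (Fin n)) :=
    {x | ∃ y : ι → ℝ, (∀ i, 0 ≤ y i) ∧ x = ∑ i, y i • a i} with hS
  have hbS : b ∉ S := fun ⟨y, hy, hyb⟩ => hb ⟨y, hy, hyb⟩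
  -- S is a convex cone
  set K : ConvexCone ℝ (EuclideanSpace ℝ (Fin n)) :=
    { carrier := S
      smul_mem' := by
        rintro c hc x ⟨y, hy, rfl⟩
        exact ⟨c • y, fun i => mul_nonneg hc.le (hy i), by
          rw [Finset.smul_sum]
          exact Finset.sum_congr rfl fun i _ => by simp [smul_smul]⟩
      add_mem' := by
        rintro x ⟨y, hy, rfl⟩ x' ⟨y', hy', rfl⟩
        exact ⟨y + y', fun i => add_nonneg (hy i) (hy' i), by
          rw [← Finset.sum_add_distrib]
          exact Finset.sum_congr rfl fun i _ => by simp [add_smul]⟩ } with hK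
  have hKne : (K : Set (EuclideanSpace ℝ (Fin n))).Nonempty := by
    refine ⟨0, ?_⟩
    show (0 : EuclideanSpace ℝ (Fin n)) ∈ S
    exact ⟨0, fun i => le_rfl, by simp⟩
  have hKc : IsClosed (K : Set (EuclideanSpace ℝ (Fin n))) := isClosed_coneSet a
  obtain ⟨v, hv1, hv2⟩ : ∃ v, (∀ x ∈ K, 0 ≤ ⟪x, v⟫_ℝ) ∧ ⟪v, b⟫_ℝ < 0 := by
    obtain ⟨v, h1, h2⟩ := ProperCone.hyperplane_separation' (x₀ := b)
      ⟨K.toPointedCone (ConvexCone.Pointed.of_nonempty_of_isClosed hKne hKc), hKc⟩ hbS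
    exact ⟨v, h1, by rwa [real_inner_comm]⟩
  have hvai : ∀ i, ⟪a i, -v⟫_ℝ ≤ 0 := by
    intro i
    have hai : a i ∈ K := by
      show a i ∈ S
      refine ⟨fun j => if j = i then 1 else 0, fun j => by positivity, ?_⟩
      simp [ite_smul, Finset.sum_ite_eq']
    have := hv1 (a i) hai
    rw [inner_neg_right]
    linarith
  have hbv := h (-v) hvai
  rw [inner_neg_right] at hbv
  rw [real_inner_comm] at hv2
  linarith

/-- Farkas' lemma, `dotProduct` version. -/
lemma farkas {ι : Type*} [Fintype ι] [DecidableEq ι] {n : ℕ}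
    (a : ι → (Fin n → ℝ)) (b : Fin n → ℝ)
    (h : ∀ v : Fin n → ℝ, (∀ i, a i ⬝ᵥ v ≤ 0) → b ⬝ᵥ v ≤ 0) :
    ∃ y : ι → ℝ, (∀ i, 0 ≤ y i) ∧ b = ∑ i, y i • a i := by
  set e := EuclideanSpace.equiv (Fin n) ℝ with he
  have hcoord : ∀ (x : Fin n → ℝ) (j : Fin n), (e.symm x) j = x j := fun _ _ => rfl
  have hinner : ∀ (x : Fin n → ℝ) (v : EuclideanSpace ℝ (Fin n)),
      ⟪e.symm x, v⟫_ℝ = x ⬝ᵥ (e v) := by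
    intro x v
    simp [PiLp.inner_apply, RCLike.inner_apply, conj_trivial, dotProduct, hcoord]
    exact Finset.sum_congr rfl fun i _ => (mul_comm _ _).trans rfl
  have hhyp : ∀ v : EuclideanSpace ℝ (Fin n),
      (∀ i, ⟪e.symm (a i), v⟫_ℝ ≤ 0) → ⟪e.symm b, v⟫_ℝ ≤ 0 := by
    intro v hv
    rw [hinner]
    exact h (e v) fun i => by rw [← hinner]; exact hv i
  obtain ⟨y, hy, hsum⟩ := farkas_euclid (fun i => e.symm (a i)) (e.symm b) hhyp
  refine ⟨y, hy, ?_⟩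
  have h2 := congrArg e hsum
  rw [e.apply_symm_apply] at h2
  rw [h2, map_sum]
  exact Finset.sum_congr rfl fun i _ => by
    rw [show e (y i • e.symm (a i)) = y i • e (e.symm (a i)) from _root_.map_smul e (y i) _,
      e.apply_symm_apply]


lemma nonneg_of_small {b c ε : ℝ} (hε : 0 < ε)
    (h : ∀ t : ℝ, 0 < t → t ≤ ε → 0 ≤ t * b + t ^ 2 * c) : 0 ≤ b := by
  by_contra hb
  push_neg at hb
  rcases le_or_gt c 0 with hc | hc
  · have := h ε hε le_rfl
    nlinarith
  · set t := min ε (-b / (2 * c)) with ht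
    have ht0 : 0 < t := lt_min hε (div_pos (by linarith) (by linarith))
    have h2 : t ≤ -b / (2 * c) := min_le_right _ _
    have h3 : t * c ≤ -b / 2 := by
      have := mul_le_mul_of_nonneg_right h2 hc.le
      calc t * c ≤ -b / (2 * c) * c := this
        _ = -b / 2 := by field_simp
    have h4 := h t ht0 (min_le_left _ _)
    nlinarith

lemma quadExpand {k : ℕ} (q c u v : Fin k → ℝ) :
    (1 / 2) * (∑ i, q i * (v i * v i)) + ∑ i, c i * v i
    = ((1 / 2) * (∑ i, q i * (u i * u i)) + ∑ i, c i * u i)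
      + (∑ i, (q i * u i + c i) * (v i - u i))
      + (1 / 2) * (∑ i, q i * ((v i - u i) * (v i - u i))) := by
  simp only [Finset.mul_sum, ← Finset.sum_add_distrib]
  exact Finset.sum_congr rfl fun i _ => by ring

lemma dot_diag {k : ℕ} (q u v : Fin k → ℝ) :
    u ⬝ᵥ (Matrix.diagonal q).mulVec v = ∑ i, q i * (u i * v i) := by
  simp [dotProduct, mulVec_diagonal]
  exact Finset.sum_congr rfl fun i _ => by ring

lemma grad_g {nP : ℕ} (Q μ g g' : Fin nP → ℝ) :
    ((Matrix.diagonal Q).mulVec g + μ) ⬝ᵥ (g' - g)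
      = ∑ i, (Q i * g i + μ i) * (g' i - g i) := by
  simp [dotProduct, mulVec_diagonal]

lemma grad_x {mT nR : ℕ} (ALR : Matrix (Fin mT) (Fin nR) ℝ) (α β : Fin mT → ℝ)
    (x x' : Fin nR → ℝ) :
    (ALRᵀ.mulVec ((Matrix.diagonal α).mulVec (ALR.mulVec x) + β)) ⬝ᵥ (x' - x)
      = ∑ j, (α j * (ALR.mulVec x) j + β j) * ((ALR.mulVec x') j - (ALR.mulVec x) j) := by
  rw [mulVec_transpose, ← dotProduct_mulVec, mulVec_sub]
  simp only [dotProduct, Pi.add_apply, Pi.sub_apply, mulVec_diagonal]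

end GUEAux

namespace GUEAux

lemma jointObj_expand {mT nR nP : ℕ} (ALR : Matrix (Fin mT) (Fin nR) ℝ)
    (α β : Fin mT → ℝ) (Q μ : Fin nP → ℝ) (x x' : Fin nR → ℝ) (g g' : Fin nP → ℝ) :
    jointObj ALR α β Q μ x' g' = jointObj ALR α β Q μ x g
      + (((Matrix.diagonal Q).mulVec g + μ) ⬝ᵥ (g' - g))
      + ((ALRᵀ.mulVec ((Matrix.diagonal α).mulVec (ALR.mulVec x) + β)) ⬝ᵥ (x' - x))
      + (1 / 2) * (∑ i, Q i * ((g' i - g i) * (g' i - g i)))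
      + (1 / 2) * (∑ j, α j * (((ALR.mulVec x') j - (ALR.mulVec x) j)
          * ((ALR.mulVec x') j - (ALR.mulVec x) j))) := by
  rw [grad_g, grad_x]
  simp only [jointObj, dot_diag]
  simp only [dotProduct]
  linarith [quadExpand Q μ g g', quadExpand α β (ALR.mulVec x) (ALR.mulVec x')]

lemma dot_chargingLoad {nR nC nP : ℕ} (ACR : Matrix (Fin nC) (Fin nR) ℝ)
    (ACB : Matrix (Fin nC) (Fin nP) ℝ) (ρ : ℝ) (lam : Fin nP → ℝ) (x : Fin nR → ℝ) :
    lam ⬝ᵥ chargingLoad ACR ACB ρ x = (ρ • (ACRᵀ.mulVec (ACB.mulVec lam))) ⬝ᵥ x := by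
  unfold chargingLoad
  rw [dotProduct_smul, smul_dotProduct]
  congr 1
  rw [dotProduct_mulVec, vecMul_transpose, dotProduct_mulVec, mulVec_transpose]

lemma chargingLoad_sub {nR nC nP : ℕ} (ACR : Matrix (Fin nC) (Fin nR) ℝ)
    (ACB : Matrix (Fin nC) (Fin nP) ℝ) (ρ : ℝ) (x y : Fin nR → ℝ) :
    chargingLoad ACR ACB ρ x - chargingLoad ACR ACB ρ y
      = chargingLoad ACR ACB ρ (x - y) := by
  unfold chargingLoad
  rw [mulVec_sub, mulVec_sub, smul_sub]

lemma chargingLoad_smul {nR nC nP : ℕ} (ACR : Matrix (Fin nC) (Fin nR) ℝ)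
    (ACB : Matrix (Fin nC) (Fin nP) ℝ) (ρ t : ℝ) (x : Fin nR → ℝ) :
    chargingLoad ACR ACB ρ (t • x) = t • chargingLoad ACR ACB ρ x := by
  unfold chargingLoad
  rw [mulVec_smul, mulVec_smul, smul_comm]

end GUEAux

open GUEAux
/-- `(x*, λ*)` is a generalized user equilibrium (UE given `λ*` plus economic-dispatch KKT)
iff `λ* = Q g* + μ` for some global minimizer `(x*, g*, p*)` of the joint convex program. -/
theorem GUE_iff_joint_min {mT nR nC nP mP : ℕ}
    (ALR : Matrix (Fin mT) (Fin nR) ℝ) (ACR : Matrix (Fin nC) (Fin nR) ℝ)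
    (ACB : Matrix (Fin nC) (Fin nP) ℝ) (H : Matrix (Fin mP) (Fin nP) ℝ)
    (hALR : ∀ i j, ALR i j = 0 ∨ ALR i j = 1)
    (hACR : ∀ i j, ACR i j = 0 ∨ ACR i j = 1)
    (hACB : ∀ i j, ACB i j = 0 ∨ ACB i j = 1)
    (fbar : Fin mP → ℝ) (Q : Fin nP → ℝ) (hQ : ∀ i, 0 < Q i) (μ : Fin nP → ℝ)
    (α β : Fin mT → ℝ) (hα : ∀ i, 0 ≤ α i)
    (ρ : ℝ) (hρ : 0 < ρ)
    (xs : Fin nR → ℝ) (lams : Fin nP → ℝ) :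
    (((∀ r, 0 ≤ xs r) ∧ (∑ r, xs r) = 1 ∧
        (∀ r r', 0 < xs r →
          routeCost ALR ACR ACB α β ρ xs lams r ≤ routeCost ALR ACR ACB α β ρ xs lams r')) ∧
      (∃ (g p : Fin nP → ℝ) (γ : ℝ) (η : Fin mP → ℝ),
        (∀ ℓ, 0 ≤ η ℓ) ∧
        p = g - chargingLoad ACR ACB ρ xs ∧
        (∑ i, p i) = 0 ∧
        (∀ ℓ, H.mulVec p ℓ ≤ fbar ℓ) ∧
        η ⬝ᵥ (fbar - H.mulVec p) = 0 ∧
        lams = (Matrix.diagonal Q).mulVec g + μ ∧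
        lams = γ • (1 : Fin nP → ℝ) - Hᵀ.mulVec η)) ↔
    (∃ g p : Fin nP → ℝ,
      lams = (Matrix.diagonal Q).mulVec g + μ ∧
      jointFeasible ACR ACB H ρ fbar xs g p ∧
      ∀ x' g' p', jointFeasible ACR ACB H ρ fbar x' g' p' →
        jointObj ALR α β Q μ xs g ≤ jointObj ALR α β Q μ x' g') := by
  classical
  constructor
  · rintro ⟨⟨hx0, hxsum, hUE⟩, g, p, γ, η, hη, hp, hpsum, hHp, hcomp, hlam, hlam2⟩
    refine ⟨g, p, hlam, ⟨hp, hpsum, hHp, hxsum, hx0⟩, ?_⟩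
    rintro x' g' p' ⟨hp', hpsum', hHp', hxsum', hx0'⟩
    rw [GUEAux.jointObj_expand ALR α β Q μ xs x' g g']
    have hquad1 : 0 ≤ (1 / 2) * (∑ i, Q i * ((g' i - g i) * (g' i - g i))) := by
      apply mul_nonneg (by norm_num)
      exact Finset.sum_nonneg fun i _ => mul_nonneg (hQ i).le (mul_self_nonneg _)
    have hquad2 : 0 ≤ (1 / 2) * (∑ j, α j * (((ALR.mulVec x') j - (ALR.mulVec xs) j)
        * ((ALR.mulVec x') j - (ALR.mulVec xs) j))) := by
      apply mul_nonneg (by norm_num)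
      exact Finset.sum_nonneg fun j _ => mul_nonneg (hα j) (mul_self_nonneg _)
    -- route cost at the UE
    set c : Fin nR → ℝ := routeCost ALR ACR ACB α β ρ xs lams with hcdef
    obtain ⟨r0, hr0⟩ : ∃ r, 0 < xs r := by
      by_contra hno
      push_neg at hno
      have hz : ∀ r ∈ Finset.univ, xs r = 0 := fun r _ => le_antisymm (hno r) (hx0 r)
      rw [Finset.sum_congr rfl hz] at hxsum
      simp at hxsum
    have hcxs : c ⬝ᵥ xs = c r0 := by
      have : ∀ r ∈ Finset.univ, c r * xs r = c r0 * xs r := by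
        intro r _
        rcases eq_or_lt_of_le (hx0 r) with h0 | hpos
        · rw [← h0]; ring
        · have h1 := hUE r r0 hpos
          have h2 := hUE r0 r hr0
          rw [le_antisymm h1 h2]
      rw [show c ⬝ᵥ xs = ∑ r, c r * xs r from rfl, Finset.sum_congr rfl this,
        ← Finset.mul_sum, hxsum, mul_one]
    have hcx' : c r0 ≤ c ⬝ᵥ x' := by
      have : ∀ r ∈ Finset.univ, c r0 * x' r ≤ c r * x' r := fun r _ =>
        mul_le_mul_of_nonneg_right (hUE r0 r hr0) (hx0' r)
      calc c r0 = c r0 * ∑ r, x' r := by rw [hxsum', mul_one]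
        _ = ∑ r, c r0 * x' r := Finset.mul_sum _ _ _
        _ ≤ ∑ r, c r * x' r := Finset.sum_le_sum this
        _ = c ⬝ᵥ x' := rfl
    -- the gradient terms
    have hg' : g' = p' + chargingLoad ACR ACB ρ x' := by rw [hp']; abel
    have hg : g = p + chargingLoad ACR ACB ρ xs := by rw [hp]; abel
    have hsplit : g' - g = (p' - p) + (chargingLoad ACR ACB ρ x' - chargingLoad ACR ACB ρ xs) := by
      rw [hg', hg]; abel
    have hLp : lams ⬝ᵥ (p' - p) = η ⬝ᵥ (fbar - H.mulVec p') := by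
      have hone : (1 : Fin nP → ℝ) ⬝ᵥ (p' - p) = 0 := by
        simp [dotProduct, Finset.sum_sub_distrib, hpsum, hpsum']
      have hHT : (Hᵀ.mulVec η) ⬝ᵥ (p' - p) = η ⬝ᵥ (H.mulVec p') - η ⬝ᵥ (H.mulVec p) := by
        rw [mulVec_transpose, ← dotProduct_mulVec, mulVec_sub, dotProduct_sub]
      have hcompl : η ⬝ᵥ (H.mulVec p) = η ⬝ᵥ fbar := by
        rw [dotProduct_sub] at hcomp
        linarith
      rw [hlam2, sub_dotProduct, smul_dotProduct, hone, smul_eq_mul, mul_zero, hHT,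
        dotProduct_sub, hcompl]
      ring
    have hLpnn : 0 ≤ η ⬝ᵥ (fbar - H.mulVec p') :=
      Finset.sum_nonneg fun ℓ _ =>
        mul_nonneg (hη ℓ) (by simpa [sub_nonneg] using hHp' ℓ)
    have hLx : lams ⬝ᵥ (chargingLoad ACR ACB ρ x' - chargingLoad ACR ACB ρ xs)
        + (ALRᵀ.mulVec ((Matrix.diagonal α).mulVec (ALR.mulVec xs) + β)) ⬝ᵥ (x' - xs)
        = c ⬝ᵥ x' - c ⬝ᵥ xs := by
      rw [dotProduct_sub, GUEAux.dot_chargingLoad, GUEAux.dot_chargingLoad, dotProduct_sub]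
      rw [hcdef]
      show _ = (ALRᵀ.mulVec ((Matrix.diagonal α).mulVec (ALR.mulVec xs) + β)
        + ρ • (ACRᵀ.mulVec (ACB.mulVec lams))) ⬝ᵥ x'
        - (ALRᵀ.mulVec ((Matrix.diagonal α).mulVec (ALR.mulVec xs) + β)
        + ρ • (ACRᵀ.mulVec (ACB.mulVec lams))) ⬝ᵥ xs
      rw [add_dotProduct, add_dotProduct]
      ring
    have hgradg : ((Matrix.diagonal Q).mulVec g + μ) ⬝ᵥ (g' - g)
        = η ⬝ᵥ (fbar - H.mulVec p')
          + lams ⬝ᵥ (chargingLoad ACR ACB ρ x' - chargingLoad ACR ACB ρ xs) := by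
      rw [← hlam, hsplit, dotProduct_add, hLp]
    linarith [hgradg, hLx, hcxs, hcx']
  · rintro ⟨g, p, hlam, ⟨hp, hpsum, hHp, hxsum, hx0⟩, hmin⟩
    set c : Fin nR → ℝ := routeCost ALR ACR ACB α β ρ xs lams with hcdef
    constructor
    · refine ⟨hx0, hxsum, ?_⟩
      intro r r' hr
      by_cases hrr : r = r'
      · rw [hrr]
      -- perturbation direction
      set δ : Fin nR → ℝ :=
        fun j => (if j = r' then (1 : ℝ) else 0) - (if j = r then 1 else 0) with hδ
      have key : ∀ t : ℝ, 0 < t → t ≤ xs r →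
          0 ≤ t * (c r' - c r) + t ^ 2 * ((1 / 2) * (∑ i, Q i *
              (chargingLoad ACR ACB ρ δ i * chargingLoad ACR ACB ρ δ i))
            + (1 / 2) * (∑ j, α j * ((ALR.mulVec δ) j * (ALR.mulVec δ) j))) := by
        intro t ht htle
        set x' : Fin nR → ℝ := xs + t • δ with hx'
        set g' : Fin nP → ℝ :=
          g + (chargingLoad ACR ACB ρ x' - chargingLoad ACR ACB ρ xs) with hg'
        have hδsum : ∑ j, δ j = 0 := by
          simp [hδ, Finset.sum_sub_distrib]
        have hfeas : jointFeasible ACR ACB H ρ fbar x' g' p := by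
          refine ⟨?_, hpsum, hHp, ?_, ?_⟩
          · rw [hg', hp]; abel
          · rw [hx']
            have : ∑ j, (xs + t • δ) j = ∑ j, xs j + t * ∑ j, δ j := by
              simp [Finset.sum_add_distrib, Finset.mul_sum]
            rw [this, hδsum, hxsum]
            ring
          · intro j
            rw [hx']
            by_cases hjr : j = r
            · subst hjr
              have : δ j = -1 := by simp [hδ, hrr]
              simp [this]
              linarith
            · by_cases hjr' : j = r'
              · subst hjr'
                have : δ j = 1 := by simp [hδ, hjr]
                simp [this]
                linarith [hx0 j]
              · have : δ j = 0 := by simp [hδ, hjr, hjr']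
                simp [this]
                exact hx0 j
        have hle := hmin x' g' p hfeas
        rw [GUEAux.jointObj_expand ALR α β Q μ xs x' g g'] at hle
        -- identify the pieces
        have hdiff : g' - g = t • chargingLoad ACR ACB ρ δ := by
          rw [hg']
          have : x' - xs = t • δ := by rw [hx']; abel
          rw [add_sub_cancel_left, GUEAux.chargingLoad_sub, this, GUEAux.chargingLoad_smul]
        have hxdiff : x' - xs = t • δ := by rw [hx']; abel
        have hgrad : ((Matrix.diagonal Q).mulVec g + μ) ⬝ᵥ (g' - g)
            + (ALRᵀ.mulVec ((Matrix.diagonal α).mulVec (ALR.mulVec xs) + β)) ⬝ᵥ (x' - xs)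
            = t * (c ⬝ᵥ δ) := by
          rw [← hlam, hdiff, hxdiff, dotProduct_smul, dotProduct_smul, smul_eq_mul, smul_eq_mul,
            GUEAux.dot_chargingLoad, hcdef]
          show _ = t * ((ALRᵀ.mulVec ((Matrix.diagonal α).mulVec (ALR.mulVec xs) + β)
            + ρ • (ACRᵀ.mulVec (ACB.mulVec lams))) ⬝ᵥ δ)
          rw [add_dotProduct]
          ring
        have hcδ : c ⬝ᵥ δ = c r' - c r := by
          simp [hδ, dotProduct, mul_sub, Finset.sum_sub_distrib, mul_ite, mul_one, mul_zero]
        have hquadg : (∑ i, Q i * ((g' i - g i) * (g' i - g i)))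
            = t ^ 2 * (∑ i, Q i * (chargingLoad ACR ACB ρ δ i * chargingLoad ACR ACB ρ δ i)) := by
          rw [Finset.mul_sum]
          refine Finset.sum_congr rfl fun i _ => ?_
          have : g' i - g i = t * chargingLoad ACR ACB ρ δ i := by
            have := congrFun hdiff i
            simpa using this
          rw [this]; ring
        have hquadx : (∑ j, α j * (((ALR.mulVec x') j - (ALR.mulVec xs) j)
              * ((ALR.mulVec x') j - (ALR.mulVec xs) j)))
            = t ^ 2 * (∑ j, α j * ((ALR.mulVec δ) j * (ALR.mulVec δ) j)) := by
          rw [Finset.mul_sum]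
          refine Finset.sum_congr rfl fun j _ => ?_
          have h1 : (ALR.mulVec x') j - (ALR.mulVec xs) j = t * (ALR.mulVec δ) j := by
            have : ALR.mulVec x' - ALR.mulVec xs = t • ALR.mulVec δ := by
              rw [← mulVec_sub, hxdiff, mulVec_smul]
            have := congrFun this j
            simpa using this
          rw [h1]; ring
        rw [hquadg, hquadx] at hle
        rw [hcδ] at hgrad
        nlinarith [hle, hgrad]
      have := GUEAux.nonneg_of_small hr key
      linarith
    · -- KKT multipliers via Farkas
      have hVI : ∀ v : Fin nP → ℝ, (∑ i, v i) = 0 →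
          (∀ ℓ, H.mulVec p ℓ = fbar ℓ → H.mulVec v ℓ ≤ 0) → 0 ≤ lams ⬝ᵥ v := by
        intro v hv0 hvact
        set s : Finset (Fin mP) :=
          Finset.univ.filter (fun ℓ => 0 < H.mulVec v ℓ ∧ H.mulVec p ℓ ≠ fbar ℓ) with hs
        set ε : ℝ := if hne : s.Nonempty then
            s.inf' hne (fun ℓ => (fbar ℓ - H.mulVec p ℓ) / (H.mulVec v ℓ)) else 1 with hεdef
        have hε0 : 0 < ε := by
          rw [hεdef]
          split_ifs with hne
          · rw [Finset.lt_inf'_iff]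
            intro ℓ hℓ
            obtain ⟨h1, h2⟩ := (Finset.mem_filter.mp hℓ).2
            have hsl : 0 < fbar ℓ - H.mulVec p ℓ := by
              rcases eq_or_lt_of_le (hHp ℓ) with he | hlt
              · exact absurd he h2
              · linarith
            exact div_pos hsl h1
          · norm_num
        refine GUEAux.nonneg_of_small hε0 (c := (1 / 2) * ∑ i, Q i * (v i * v i)) ?_
        intro t ht htε
        set g' : Fin nP → ℝ := g + t • v with hg'
        set p' : Fin nP → ℝ := p + t • v with hp'
        have hfeas : jointFeasible ACR ACB H ρ fbar xs g' p' := by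
          refine ⟨?_, ?_, ?_, hxsum, hx0⟩
          · rw [hg', hp', hp]; abel
          · rw [hp']
            have : ∑ i, (p + t • v) i = ∑ i, p i + t * ∑ i, v i := by
              simp [Finset.sum_add_distrib, Finset.mul_sum]
            rw [this, hpsum, hv0]
            ring
          · intro ℓ
            have hHp' : H.mulVec p' ℓ = H.mulVec p ℓ + t * H.mulVec v ℓ := by
              rw [hp', mulVec_add, mulVec_smul]
              simp
            rw [hHp']
            by_cases hact : H.mulVec p ℓ = fbar ℓ
            · have := hvact ℓ hact
              nlinarith
            · rcases le_or_gt (H.mulVec v ℓ) 0 with hvl | hvl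
              · nlinarith [hHp ℓ]
              · have hℓs : ℓ ∈ s := Finset.mem_filter.mpr ⟨Finset.mem_univ ℓ, hvl, hact⟩
                have hεle : ε ≤ (fbar ℓ - H.mulVec p ℓ) / (H.mulVec v ℓ) := by
                  rw [hεdef]
                  rw [dif_pos ⟨ℓ, hℓs⟩]
                  exact Finset.inf'_le _ hℓs
                have : t ≤ (fbar ℓ - H.mulVec p ℓ) / (H.mulVec v ℓ) := le_trans htε hεle
                rw [le_div_iff₀ hvl] at this
                linarith
        have hle := hmin xs g' p' hfeas
        rw [GUEAux.jointObj_expand ALR α β Q μ xs xs g g'] at hle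
        have hgd : g' - g = t • v := by rw [hg']; abel
        have hgrad : ((Matrix.diagonal Q).mulVec g + μ) ⬝ᵥ (g' - g) = t * (lams ⬝ᵥ v) := by
          rw [← hlam, hgd, dotProduct_smul, smul_eq_mul]
        have hx0' : (ALRᵀ.mulVec ((Matrix.diagonal α).mulVec (ALR.mulVec xs) + β)) ⬝ᵥ (xs - xs)
            = 0 := by simp
        have hquadg : (∑ i, Q i * ((g' i - g i) * (g' i - g i)))
            = t ^ 2 * (∑ i, Q i * (v i * v i)) := by
          rw [Finset.mul_sum]
          refine Finset.sum_congr rfl fun i _ => ?_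
          have : g' i - g i = t * v i := by
            have := congrFun hgd i
            simpa using this
          rw [this]; ring
        have hquadx : (∑ j, α j * (((ALR.mulVec xs) j - (ALR.mulVec xs) j)
            * ((ALR.mulVec xs) j - (ALR.mulVec xs) j))) = 0 := by simp
        rw [hgrad, hx0', hquadg, hquadx] at hle
        nlinarith [hle]
      -- Farkas
      set A : (Fin mP ⊕ Bool) → (Fin nP → ℝ) := fun i =>
        Sum.rec (fun ℓ => if H.mulVec p ℓ = fbar ℓ then (fun j => H ℓ j) else 0)
          (fun b => if b then (fun _ => (1 : ℝ)) else (fun _ => (-1 : ℝ))) i with hA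
      have hyp : ∀ v : Fin nP → ℝ, (∀ i, A i ⬝ᵥ v ≤ 0) → (-lams) ⬝ᵥ v ≤ 0 := by
        intro v hv
        have h1 := hv (Sum.inr true)
        have h2 := hv (Sum.inr false)
        rw [hA] at h1 h2
        simp [dotProduct] at h1 h2
        have hsv : ∑ i, v i = 0 := le_antisymm h1 (by linarith)
        have hact : ∀ ℓ, H.mulVec p ℓ = fbar ℓ → H.mulVec v ℓ ≤ 0 := by
          intro ℓ hℓ
          have h3 := hv (Sum.inl ℓ)
          rw [hA] at h3
          dsimp only at h3
          rw [if_pos hℓ] at h3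
          exact h3
        have := hVI v hsv hact
        rw [neg_dotProduct]
        linarith
      obtain ⟨y, hy, hsum⟩ := GUEAux.farkas A (-lams) hyp
      refine ⟨g, p, y (Sum.inr false) - y (Sum.inr true),
        fun ℓ => if H.mulVec p ℓ = fbar ℓ then y (Sum.inl ℓ) else 0,
        ?_, hp, hpsum, hHp, ?_, hlam, ?_⟩
      · intro ℓ
        dsimp only
        split_ifs
        · exact hy _
        · exact le_rfl
      · refine Finset.sum_eq_zero fun ℓ _ => ?_
        by_cases hact : H.mulVec p ℓ = fbar ℓ
        · simp [hact]
        · simp [hact]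
      · funext j
        have hj := congrFun hsum j
        rw [Finset.sum_apply] at hj
        rw [Fintype.sum_sum_type] at hj
        have hb : ∑ b : Bool, (y (Sum.inr b) • A (Sum.inr b)) j
            = y (Sum.inr true) - y (Sum.inr false) := by
          rw [Fintype.sum_bool]
          simp [hA]
          ring
        have hherm : ∑ ℓ, (y (Sum.inl ℓ) • A (Sum.inl ℓ)) j
            = ∑ ℓ, (if H.mulVec p ℓ = fbar ℓ then y (Sum.inl ℓ) else 0) * H ℓ j := by
          refine Finset.sum_congr rfl fun ℓ _ => ?_
          by_cases hact : H.mulVec p ℓ = fbar ℓ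
          · simp [hA, hact]
          · simp [hA, hact]
        rw [hherm, hb] at hj
        have hHt : (Hᵀ.mulVec (fun ℓ => if H.mulVec p ℓ = fbar ℓ then y (Sum.inl ℓ) else 0)) j
            = ∑ ℓ, (if H.mulVec p ℓ = fbar ℓ then y (Sum.inl ℓ) else 0) * H ℓ j := by
          simp [mulVec, transpose_apply, dotProduct, mul_ite, mul_zero]
          exact Finset.sum_congr rfl fun ℓ _ => by split_ifs <;> ring
        simp only [Pi.sub_apply, Pi.smul_apply, Pi.one_apply, smul_eq_mul, hHt]
        have hlj : (-lams) j = -lams j := rfl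
        rw [hlj] at hj
        linarith [hj]
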